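/- Let H be an m×n array of e×e CPMs and/or ZMs given by the e-fold dispersion of an m×n base matrix B over GF(2^r), e = 2^r − 1. Let μ_0 = rank(B^{∘0}) and μ_1 = rank(B). Then rank(H) ≤ μ_0 + Σ_{i=1}^{r−1} C(r,i) · min{m, n, μ_1^i}. -/

import Mathlib

def wt14 (k : ℕ) : ℕ := (Nat.digits 2 k).sum

@[simp] lemma wt14_zero : wt14 0 = 0 := by simp [wt14]

lemma wt14_def {k : ℕ} (hk : k ≠ 0) : wt14 k = k % 2 + wt14 (k / 2) := by
  rw [wt14, Nat.digits_def' (by norm_num) (Nat.pos_of_ne_zero hk)]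
  simp [wt14]

lemma wt14_two_mul (q : ℕ) : wt14 (2 * q) = wt14 q := by
  rcases Nat.eq_zero_or_pos q with rfl | hq
  · simp
  · rw [wt14_def (by omega)]
    simp [Nat.mul_div_cancel_left, Nat.mul_mod_right]

lemma wt14_two_mul_add_one (q : ℕ) : wt14 (2 * q + 1) = wt14 q + 1 := by
  rw [wt14_def (by omega)]
  have h1 : (2 * q + 1) % 2 = 1 := by omega
  have h2 : (2 * q + 1) / 2 = q := by omega
  rw [h1, h2, Nat.add_comm]

lemma wt14_pos {k : ℕ} (hk : k ≠ 0) : 0 < wt14 k := by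
  induction k using Nat.strong_induction_on with
  | _ k ih =>
    rcases Nat.even_or_odd k with ⟨q, hq⟩ | ⟨q, hq⟩
    · subst hq
      rw [show q + q = 2 * q by ring, wt14_two_mul]
      exact ih q (by omega) (by omega)
    · subst hq
      rw [wt14_two_mul_add_one]; omega

lemma wt14_le {r k : ℕ} (h : k < 2 ^ r) : wt14 k ≤ r := by
  induction r generalizing k with
  | zero => interval_cases k; simp
  | succ r ih =>
    rcases Nat.eq_zero_or_pos k with rfl | hk
    · simp
    rcases Nat.even_or_odd k with ⟨q, hq⟩ | ⟨q, hq⟩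
    · subst hq
      rw [show q + q = 2 * q by ring, wt14_two_mul]
      have := ih (k := q) (by rw [pow_succ] at h; omega)
      omega
    · subst hq
      rw [wt14_two_mul_add_one]
      have := ih (k := q) (by rw [pow_succ] at h; omega)
      omega

lemma wt14_lt {r k : ℕ} (h : k + 1 < 2 ^ r) : wt14 k < r := by
  induction r generalizing k with
  | zero => simp at h
  | succ r ih =>
    rcases Nat.eq_zero_or_pos k with rfl | hk
    · simp
    rcases Nat.even_or_odd k with ⟨q, hq⟩ | ⟨q, hq⟩
    · subst hq
      rw [show q + q = 2 * q by ring, wt14_two_mul]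
      have := wt14_le (r := r) (k := q) (by rw [pow_succ] at h; omega)
      omega
    · subst hq
      rw [wt14_two_mul_add_one]
      have := ih (k := q) (by rw [pow_succ] at h; omega)
      omega

lemma wt14_all_ones (r : ℕ) : wt14 (2 ^ r - 1) = r := by
  induction r with
  | zero => simp
  | succ r ih =>
    have : 2 ^ (r + 1) - 1 = 2 * (2 ^ r - 1) + 1 := by
      have := Nat.one_le_two_pow (n := r); rw [pow_succ]; omega
    rw [this, wt14_two_mul_add_one, ih]

lemma count14 (r : ℕ) : ∀ i : ℕ,
    ((Finset.range (2 ^ r)).filter (fun k => wt14 k = i)).card = r.choose i := by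
  induction r with
  | zero =>
    intro i
    rcases i with _ | i <;> simp [Finset.filter_singleton, Finset.range_one]
  | succ r ih =>
    intro i
    have hsplit : Finset.range (2 ^ (r + 1)) =
        (Finset.range (2 ^ r)).image (fun q => 2 * q) ∪
        (Finset.range (2 ^ r)).image (fun q => 2 * q + 1) := by
      ext k
      simp only [Finset.mem_union, Finset.mem_image, Finset.mem_range, pow_succ]
      constructor
      · intro hk
        rcases Nat.even_or_odd k with ⟨q, hq⟩ | ⟨q, hq⟩
        · exact Or.inl ⟨q, by omega, by omega⟩
        · exact Or.inr ⟨q, by omega, by omega⟩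
      · rintro (⟨q, hq, rfl⟩ | ⟨q, hq, rfl⟩) <;> omega
    have hdisj : Disjoint
        (((Finset.range (2 ^ r)).image (fun q => 2 * q)).filter (fun k => wt14 k = i))
        (((Finset.range (2 ^ r)).image (fun q => 2 * q + 1)).filter (fun k => wt14 k = i)) := by
      rw [Finset.disjoint_left]
      intro k hk hk'
      simp only [Finset.mem_filter, Finset.mem_image] at hk hk'
      obtain ⟨⟨q, _, rfl⟩, _⟩ := hk
      obtain ⟨⟨q', _, hq'⟩, _⟩ := hk'
      omega
    rw [hsplit, Finset.filter_union, Finset.card_union_of_disjoint hdisj,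
      Finset.filter_image, Finset.filter_image,
      Finset.card_image_of_injective _ (fun a b h => by omega),
      Finset.card_image_of_injective _ (fun a b h => by omega)]
    simp only [wt14_two_mul, wt14_two_mul_add_one]
    rcases i with _ | i
    · have : (Finset.filter (fun q => wt14 q + 1 = 0) (Finset.range (2 ^ r))) = ∅ := by
        apply Finset.filter_false_of_mem; intro x _; omega
      simp [this, ih 0]
    · have : (Finset.filter (fun q => wt14 q + 1 = i + 1) (Finset.range (2 ^ r))) =
          (Finset.filter (fun q => wt14 q = i) (Finset.range (2 ^ r))) := by
        apply Finset.filter_congr; intro x _; constructor <;> (intro h; omega)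
      rw [this, ih (i + 1), ih i, Nat.choose_succ_succ, Nat.add_comm]

section RankTools

open Matrix

variable {K L : Type*} [Field K] [Field L]

lemma rank_add_le14 {m' n' : Type*} [Fintype m'] [Fintype n']
    (A B : Matrix m' n' K) : (A + B).rank ≤ A.rank + B.rank := by
  classical
  rw [Matrix.rank, Matrix.rank, Matrix.rank, Matrix.mulVecLin_add]
  have hle : LinearMap.range (A.mulVecLin + B.mulVecLin) ≤
      LinearMap.range A.mulVecLin ⊔ LinearMap.range B.mulVecLin := by
    rintro x ⟨y, rfl⟩
    exact Submodule.mem_sup.2 ⟨A.mulVecLin y, ⟨y, rfl⟩, B.mulVecLin y, ⟨y, rfl⟩, rfl⟩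
  exact le_trans (Submodule.finrank_mono hle)
    (Submodule.finrank_add_le_finrank_add_finrank _ _)

lemma rank_sum_le14 {m' n' : Type*} [Fintype m'] [Fintype n'] {ι : Type*}
    (s : Finset ι) (M : ι → Matrix m' n' K) :
    (∑ k ∈ s, M k).rank ≤ ∑ k ∈ s, (M k).rank := by
  classical
  induction s using Finset.induction_on with
  | empty => simp
  | insert _ _ hx ih =>
    rw [Finset.sum_insert hx, Finset.sum_insert hx]
    exact le_trans (rank_add_le14 _ _) (by omega)

lemma exists_factor14 {m' n' : Type*} [Fintype m'] [Fintype n'] (A : Matrix m' n' K) :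
    ∃ (C : Matrix m' (Fin A.rank) K) (R : Matrix (Fin A.rank) n' K), A = C * R := by
  classical
  set V := Submodule.span K (Set.range Aᵀ) with hV
  have hr : A.rank = Module.finrank K V := A.rank_eq_finrank_span_cols
  let b : Module.Basis (Fin (Module.finrank K V)) K V := Module.finBasis K V
  have hmem : ∀ q : n', Aᵀ q ∈ V := fun q => Submodule.subset_span ⟨q, rfl⟩
  refine ⟨Matrix.of fun p i => (b (Fin.cast hr i) : m' → K) p,
    Matrix.of fun i q => b.repr ⟨Aᵀ q, hmem q⟩ (Fin.cast hr i), ?_⟩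
  ext p q
  rw [Matrix.mul_apply]
  simp only [Matrix.of_apply]
  have hbij : Function.Bijective (Fin.cast hr : Fin A.rank → Fin (Module.finrank K V)) :=
    (Fin.castOrderIso hr).toEquiv.bijective
  rw [show (∑ j : Fin A.rank,
        (b (Fin.cast hr j) : m' → K) p * b.repr ⟨Aᵀ q, hmem q⟩ (Fin.cast hr j))
      = ∑ j, (b j : m' → K) p * b.repr ⟨Aᵀ q, hmem q⟩ j from
    Fintype.sum_bijective _ hbij _ _ (fun i => rfl)]
  have h0 : ((∑ j, b.repr ⟨Aᵀ q, hmem q⟩ j • b j : V) : m' → K) = Aᵀ q := by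
    rw [b.sum_repr ⟨Aᵀ q, hmem q⟩]
  have h1 : ((∑ j, b.repr ⟨Aᵀ q, hmem q⟩ j • b j : V) : m' → K)
      = ∑ j, b.repr ⟨Aᵀ q, hmem q⟩ j • (b j : m' → K) := by
    simp only [Submodule.coe_sum, Submodule.coe_smul]
  rw [h1] at h0
  have h2 := congrFun h0 p
  rw [Finset.sum_apply] at h2
  simp only [Pi.smul_apply, smul_eq_mul] at h2
  calc A p q = Aᵀ q p := rfl
    _ = ∑ j, (b j : m' → K) p * b.repr ⟨Aᵀ q, hmem q⟩ j := by
        rw [← h2]; exact Finset.sum_congr rfl fun j _ => mul_comm _ _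

lemma rank_map_le14 {m' n' : Type*} [Fintype m'] [Fintype n'] (A : Matrix m' n' K)
    (f : K →+* L) : (A.map f).rank ≤ A.rank := by
  obtain ⟨C, R, hA⟩ := exists_factor14 A
  calc (A.map f).rank = ((C * R).map f).rank := by rw [← hA]
    _ = (C.map f * R.map f).rank := by rw [Matrix.map_mul]
    _ ≤ (C.map f).rank := (C.map f).rank_mul_le_left (R.map f)
    _ ≤ Fintype.card (Fin A.rank) := Matrix.rank_le_card_width _
    _ = A.rank := by simp

end RankTools

section Hadamard

open Matrix

variable {K : Type*} [Field K] {m' n' : Type*} [Fintype m'] [Fintype n']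

lemma rank_hadamard_le14 (A B : Matrix m' n' K) :
    (Matrix.of fun p q => A p q * B p q : Matrix m' n' K).rank ≤ A.rank * B.rank := by
  obtain ⟨C₁, R₁, hA⟩ := exists_factor14 A
  obtain ⟨C₂, R₂, hB⟩ := exists_factor14 B
  have key : (Matrix.of fun p q => A p q * B p q : Matrix m' n' K) =
      (Matrix.of fun p (ij : Fin A.rank × Fin B.rank) => C₁ p ij.1 * C₂ p ij.2) *
      (Matrix.of fun (ij : Fin A.rank × Fin B.rank) q => R₁ ij.1 q * R₂ ij.2 q) := by
    ext p q
    rw [Matrix.mul_apply]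
    simp only [Matrix.of_apply]
    rw [Fintype.sum_prod_type]
    have e1 := congrFun (congrFun hA p) q
    have e2 := congrFun (congrFun hB p) q
    rw [Matrix.mul_apply] at e1 e2
    rw [e1, e2, Finset.sum_mul_sum]
    exact Finset.sum_congr rfl fun i _ => Finset.sum_congr rfl fun j _ => by ring
  rw [key]
  refine le_trans (Matrix.rank_mul_le_left _ _) (le_trans (Matrix.rank_le_card_width _) ?_)
  simp

end Hadamard

section PowRank

open Matrix

variable {F : Type*} [Field F] [CharP F 2] {m' n' : Type*} [Fintype m'] [Fintype n']

lemma rank_ones_le14 : (Matrix.of fun (_ : m') (_ : n') => (1 : F)).rank ≤ 1 := by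
  have : (Matrix.of fun (_ : m') (_ : n') => (1 : F)) =
      (Matrix.of fun (_ : m') (_ : Fin 1) => (1 : F)) *
      (Matrix.of fun (_ : Fin 1) (_ : n') => (1 : F)) := by
    ext p q; simp [Matrix.mul_apply]
  rw [this]
  exact le_trans (Matrix.rank_mul_le_left _ _)
    (le_trans (Matrix.rank_le_card_width _) (by simp))

lemma rank_pow_le14 (B : Matrix m' n' F) :
    ∀ k : ℕ, (Matrix.of fun p q => B p q ^ k).rank ≤ B.rank ^ wt14 k := by
  haveI : Fact (Nat.Prime 2) := ⟨Nat.prime_two⟩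
  intro k
  induction k using Nat.strong_induction_on with
  | _ k ih =>
    rcases Nat.eq_zero_or_pos k with rfl | hk
    · simpa using rank_ones_le14
    rcases Nat.even_or_odd k with ⟨q, hq⟩ | ⟨q, hq⟩
    · -- k = 2q, q ≥ 1
      have hq1 : 0 < q := by omega
      have hk2 : k = 2 * q := by omega
      have hmap : (Matrix.of fun p q' => B p q' ^ k) =
          (Matrix.of fun p q' => B p q' ^ q).map (frobenius F 2) := by
        ext p q'
        simp only [Matrix.map_apply, Matrix.of_apply, frobenius_def]
        rw [← pow_mul, hk2, Nat.mul_comm]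
      rw [hmap, hk2, wt14_two_mul]
      exact le_trans (rank_map_le14 _ _) (ih q (by omega))
    · -- k = 2q + 1
      have hk2 : k = 2 * q + 1 := by omega
      have hsplit : (Matrix.of fun p q' => B p q' ^ k) =
          (Matrix.of fun p q' => B p q' * (Matrix.of fun p q' => B p q' ^ (2 * q)) p q') := by
        ext p q'
        simp only [Matrix.of_apply]
        rw [hk2, pow_succ, mul_comm]
      rw [hsplit, hk2, wt14_two_mul_add_one]
      refine le_trans (rank_hadamard_le14 B _) ?_
      have h2q : (Matrix.of fun p q' => B p q' ^ (2 * q)).rank ≤ B.rank ^ wt14 q := by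
      -- handle q = 0 separately since 2*q = 0 not < k only when... 2*q < k always here
        have := ih (2 * q) (by omega)
        rwa [wt14_two_mul] at this
      calc B.rank * (Matrix.of fun p q' => B p q' ^ (2 * q)).rank
          ≤ B.rank * B.rank ^ wt14 q := Nat.mul_le_mul_left _ h2q
        _ = B.rank ^ (wt14 q + 1) := by rw [pow_succ, mul_comm]

end PowRank

section BaseChange

open Matrix

variable {F : Type*} [Field F] [CharP F 2]

lemma li_transfer14 [Algebra (ZMod 2) F] {ι m' : Type*} (v : ι → m' → ZMod 2)
    (hv : LinearIndependent (ZMod 2) v) :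
    LinearIndependent F (fun i => (algebraMap (ZMod 2) F) ∘ v i) := by
  rw [linearIndependent_iff'] at hv ⊢
  intro s g hg i hi
  classical
  let b := Module.Basis.ofVectorSpace (ZMod 2) F
  have key : ∀ t, ∑ j ∈ s, (b.repr (g j) t) • v j = 0 := by
    intro t
    have hcoord : ∀ p : m', ∑ j ∈ s, (v j p) • g j = 0 := by
      intro p
      have := congrFun hg p
      rw [Finset.sum_apply] at this
      simp only [Pi.smul_apply, Function.comp_apply, smul_eq_mul, Pi.zero_apply] at this
      rw [← this]
      refine Finset.sum_congr rfl fun j _ => ?_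
      rw [Algebra.smul_def, mul_comm]
    have hrepr : ∀ p : m', ∑ j ∈ s, (v j p) • b.repr (g j) = 0 := by
      intro p
      have h := congrArg b.repr (hcoord p)
      rw [map_sum, map_zero] at h
      simpa only [_root_.map_smul] using h
    ext p
    have h2 := DFunLike.congr_fun (hrepr p) t
    simp only [Finset.sum_apply', Finsupp.smul_apply, Finsupp.coe_zero, Pi.zero_apply,
      smul_eq_mul] at h2
    simp only [Finset.sum_apply, Pi.smul_apply, Pi.zero_apply, smul_eq_mul]
    rw [← h2]
    exact Finset.sum_congr rfl fun j _ => mul_comm _ _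
  have hz : ∀ t, b.repr (g i) t = 0 := fun t => hv s (fun j => b.repr (g j) t) (key t) i hi
  have : b.repr (g i) = 0 := Finsupp.ext hz
  exact b.repr.map_eq_zero_iff.mp this

end BaseChange

open Matrix in
lemma rank_le_rank_map14 {F : Type*} [Field F] [CharP F 2] {m' n' : Type*} [Fintype m']
    [Fintype n'] (A : Matrix m' n' (ZMod 2)) (f : ZMod 2 →+* F) :
    A.rank ≤ (A.map f).rank := by
  classical
  letI : Algebra (ZMod 2) F := ZMod.algebra _ _
  have hf : f = algebraMap (ZMod 2) F := Subsingleton.elim _ _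
  rw [Matrix.rank_eq_finrank_span_cols, Matrix.rank_eq_finrank_span_cols]
  obtain ⟨bs, hbsub, hspan, hli⟩ := exists_linearIndependent (ZMod 2) (Set.range A.col)
  have hfin : bs.Finite := (Set.finite_range Aᵀ).subset hbsub
  haveI : Fintype bs := hfin.fintype
  rw [← hspan, finrank_span_set_eq_card hli]
  set w : bs → (m' → F) := fun x => (algebraMap (ZMod 2) F) ∘ (x : m' → ZMod 2) with hw
  have hliw : LinearIndependent F w := li_transfer14 _ hli
  have hcard : bs.toFinset.card = Module.finrank F (Submodule.span F (Set.range w)) := by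
    rw [finrank_span_eq_card hliw, Set.toFinset_card]
  rw [hcard]
  refine Submodule.finrank_mono ?_
  rw [Submodule.span_le]
  rintro - ⟨⟨x, hx⟩, rfl⟩
  obtain ⟨q, rfl⟩ := hbsub hx
  refine Submodule.subset_span ⟨q, ?_⟩
  ext p
  simp [hw, hf, Matrix.map_apply]

/-- Upper bound on the rank of the CPM/ZM dispersion `H` of a base matrix `B`:
`rank(H) ≤ μ₀ + Σ_{i=1}^{r-1} C(r,i)·min{m, n, μ₁^i}`. -/
theorem stmt14 {r e m n : ℕ} (he : e = 2 ^ r - 1) (he0 : 0 < e)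
    {F : Type*} [Field F] [Fintype F] [DecidableEq F] [CharP F 2]
    (hF : Fintype.card F = 2 ^ r)
    (α : F) (hα : orderOf α = e)
    (B : Matrix (Fin m) (Fin n) F)
    (H : Matrix (Fin m × Fin e) (Fin n × Fin e) (ZMod 2))
    (hH : ∀ p q, H p q = if α ^ ((q.2 - p.2 : Fin e) : ℕ) = B p.1 q.1 then 1 else 0) :
    H.rank ≤ (Matrix.of fun i j => if B i j = 0 then (0 : F) else 1).rank +
      ∑ i ∈ Finset.Icc 1 (r - 1), Nat.choose r i * min (min m n) (B.rank ^ i) := by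
  classical
  have hr1 : 1 ≤ r := by
    rcases Nat.eq_zero_or_pos r with rfl | hr
    · simp at he; omega
    · exact hr
  have he2 : e + 1 = 2 ^ r := by have := Nat.one_le_two_pow (n := r); omega
  haveI : NeZero e := ⟨by omega⟩
  have hαe : α ^ e = 1 := hα ▸ pow_orderOf_eq_one α
  have hα0 : α ≠ 0 := by
    intro h
    rw [h, zero_pow (by omega)] at hαe
    exact one_ne_zero hαe.symm
  set f : ZMod 2 →+* F := ZMod.castHom dvd_rfl F with hfdef
  set E0 : Matrix (Fin m) (Fin n) F :=
    Matrix.of fun i j => if B i j = 0 then (0 : F) else 1 with hE0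
  set E : ℕ → Matrix (Fin m) (Fin n) F :=
    fun k => if k = 0 then E0 else Matrix.of fun p q => B p q ^ k with hE
  set L : ℕ → Matrix (Fin m × Fin e) (Fin m) F :=
    fun k => Matrix.of fun ps p' => if ps.1 = p' then α ^ ((ps.2 : ℕ) * k) else 0 with hL
  set R : ℕ → Matrix (Fin n) (Fin n × Fin e) F :=
    fun k => Matrix.of fun q' qu => if qu.1 = q' then (α ^ ((qu.2 : ℕ) * k))⁻¹ else 0 with hR
  have hentry : ∀ (k : ℕ) (p : Fin m) (s : Fin e) (q : Fin n) (u : Fin e),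
      (L k * E k * R k) (p, s) (q, u)
        = α ^ ((s : ℕ) * k) * E k p q * (α ^ ((u : ℕ) * k))⁻¹ := by
    intro k p s q u
    simp only [hL, hR, Matrix.mul_apply, Matrix.of_apply, ite_mul, zero_mul, mul_ite, mul_zero,
      Finset.sum_ite_eq, Finset.sum_ite_eq', Finset.mem_univ, if_true]
  have hdecomp : H.map f = ∑ k ∈ Finset.range e, L k * E k * R k := by
    ext ⟨p, s⟩ ⟨q, u⟩
    rw [Matrix.map_apply, hH (p, s) (q, u)]
    rw [Matrix.sum_apply]
    simp only [hentry]
    show f (if α ^ ((u - s : Fin e) : ℕ) = B p q then 1 else 0) = _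
    set d : ℕ := ((u - s : Fin e) : ℕ) with hd
    set x : F := α ^ d with hxdef
    have hx0 : x ≠ 0 := pow_ne_zero _ hα0
    have hxe : x ^ e = 1 := by
      rw [hxdef, ← pow_mul, mul_comm, pow_mul, hαe, one_pow]
    have hxs : x * α ^ (s : ℕ) = α ^ (u : ℕ) := by
      have h1 : ((u - s) + s : Fin e) = u := sub_add_cancel u s
      have h2 := congrArg Fin.val h1
      rw [Fin.val_add] at h2
      rw [← hd] at h2
      rw [hxdef, ← pow_add,
        show d + (s : ℕ) = e * ((d + (s : ℕ)) / e) + (d + (s : ℕ)) % e from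
          (Nat.div_add_mod _ e).symm,
        pow_add, pow_mul, hαe, one_pow, one_mul, h2]
    have hterm : ∀ k, α ^ ((s : ℕ) * k) * (α ^ ((u : ℕ) * k))⁻¹ = (x⁻¹) ^ k := by
      intro k
      have hne : α ^ ((s : ℕ) * k) ≠ 0 := pow_ne_zero _ hα0
      have h3 : α ^ ((u : ℕ) * k) = x ^ k * α ^ ((s : ℕ) * k) := by
        rw [pow_mul, ← hxs, mul_pow, ← pow_mul, ← pow_mul]
      calc α ^ ((s : ℕ) * k) * (α ^ ((u : ℕ) * k))⁻¹
          = α ^ ((s : ℕ) * k) * ((α ^ ((s : ℕ) * k))⁻¹ * (x ^ k)⁻¹) := by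
            rw [h3, mul_inv, mul_comm ((x ^ k)⁻¹) _]
        _ = (x ^ k)⁻¹ := by rw [← mul_assoc, mul_inv_cancel₀ hne, one_mul]
        _ = (x⁻¹) ^ k := by rw [inv_pow]
    have hmain : ∀ k ∈ Finset.range e,
        α ^ ((s : ℕ) * k) * E k p q * (α ^ ((u : ℕ) * k))⁻¹
          = if k = 0 then E0 p q else (B p q * x⁻¹) ^ k := by
      intro k _
      rcases Nat.eq_zero_or_pos k with rfl | hk
      · simp [hE]
      · rw [if_neg (by omega), hE]
        simp only [if_neg (Nat.pos_iff_ne_zero.mp hk), Matrix.of_apply]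
        rw [mul_comm (α ^ ((s : ℕ) * k)) (B p q ^ k), mul_assoc, hterm k, mul_pow]
    rw [Finset.sum_congr rfl hmain]
    rw [Finset.range_eq_Ico, Finset.sum_eq_sum_Ico_succ_bot he0]
    rw [if_pos rfl]
    have hico : ∀ k ∈ Finset.Ico 1 e, (if k = 0 then E0 p q else (B p q * x⁻¹) ^ k)
        = (B p q * x⁻¹) ^ k := by
      intro k hk
      rw [Finset.mem_Ico] at hk
      rw [if_neg (by omega)]
    rw [Finset.sum_congr rfl hico]
    by_cases hy0 : B p q = 0
    · have hzz : ∀ k ∈ Finset.Ico 1 e, (B p q * x⁻¹) ^ k = 0 := by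
        intro k hk
        rw [Finset.mem_Ico] at hk
        rw [hy0, zero_mul, zero_pow (by omega)]
      rw [Finset.sum_congr rfl hzz, Finset.sum_const_zero]
      rw [if_neg (fun h => hx0 (by rw [h, hy0]))]
      simp [hE0, hy0]
    · rw [show E0 p q = 1 by simp [hE0, Matrix.of_apply, hy0]]
      have hsum : (1 : F) + ∑ k ∈ Finset.Ico 1 e, (B p q * x⁻¹) ^ k
          = ∑ k ∈ Finset.range e, (B p q * x⁻¹) ^ k := by
        rw [Finset.range_eq_Ico, Finset.sum_eq_sum_Ico_succ_bot he0, pow_zero]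
      rw [hsum]
      have hze : (B p q * x⁻¹) ^ e = 1 := by
        rw [mul_pow, inv_pow, hxe, inv_one, mul_one]
        have := FiniteField.pow_card_sub_one_eq_one (B p q) hy0
        rwa [hF, ← he] at this
      by_cases hz1 : B p q * x⁻¹ = 1
      · have hxy : x = B p q := by
          rw [mul_inv_eq_one₀ hx0] at hz1
          exact hz1.symm
        rw [if_pos hxy, hz1]
        simp only [one_pow, Finset.sum_const, Finset.card_range, nsmul_eq_mul, mul_one]
        have heF : (e : F) + 1 = 0 := by
          have h1 : ((e : F) + 1) = ((e + 1 : ℕ) : F) := by push_cast; ring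
          rw [h1, he2]
          push_cast
          rw [show (2 : F) = 0 from by exact_mod_cast CharP.cast_eq_zero F 2]
          exact zero_pow (by omega)
        have heq : (e : F) = -1 := eq_neg_of_add_eq_zero_left heF
        rw [map_one, heq, CharTwo.neg_eq]
      · rw [geom_sum_eq hz1, hze, sub_self, zero_div]
        rw [if_neg ?_, map_zero]
        intro hxy
        apply hz1
        rw [← hxy, mul_inv_cancel₀ hx0]
  have hM0 : (L 0 * E 0 * R 0).rank ≤ E0.rank := by
    refine le_trans (Matrix.rank_mul_le_left _ _) ?_
    refine le_trans (Matrix.rank_mul_le_right _ _) ?_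
    simp [hE]
  have hMk : ∀ k ∈ Finset.Ico 1 e,
      (L k * E k * R k).rank ≤ min (min m n) (B.rank ^ wt14 k) := by
    intro k hk
    rw [Finset.mem_Ico] at hk
    have hEk : E k = Matrix.of fun p q => B p q ^ k := by
      rw [hE]; simp only [if_neg (by omega : ¬ k = 0)]
    have h1 : (L k * E k * R k).rank ≤ (E k).rank :=
      le_trans (Matrix.rank_mul_le_left _ _) (Matrix.rank_mul_le_right _ _)
    refine le_trans h1 (le_min (le_min ?_ ?_) ?_)
    · exact le_trans (Matrix.rank_le_card_height _) (by simp)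
    · exact le_trans (Matrix.rank_le_card_width _) (by simp)
    · rw [hEk]; exact rank_pow_le14 B k
  have hmaps : ∀ k ∈ Finset.Ico 1 e, wt14 k ∈ Finset.Icc 1 (r - 1) := by
    intro k hk
    rw [Finset.mem_Ico] at hk
    rw [Finset.mem_Icc]
    constructor
    · exact wt14_pos (by omega)
    · have : wt14 k < r := wt14_lt (by omega)
      omega
  have hfiber : ∀ i ∈ Finset.Icc 1 (r - 1),
      ((Finset.Ico 1 e).filter (fun k => wt14 k = i)).card = r.choose i := by
    intro i hi
    rw [Finset.mem_Icc] at hi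
    rw [← count14 r i]
    congr 1
    ext k
    simp only [Finset.mem_filter, Finset.mem_Ico, Finset.mem_range]
    constructor
    · rintro ⟨⟨h1, h2⟩, h3⟩
      exact ⟨by omega, h3⟩
    · rintro ⟨h1, h2⟩
      refine ⟨⟨?_, ?_⟩, h2⟩
      · rcases Nat.eq_zero_or_pos k with rfl | hh
        · rw [wt14_zero] at h2; omega
        · omega
      · by_contra hke
        have hke' : k = e := by omega
        rw [hke', he, wt14_all_ones] at h2
        omega
  have hregroup : ∑ k ∈ Finset.Ico 1 e, min (min m n) (B.rank ^ wt14 k)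
      = ∑ i ∈ Finset.Icc 1 (r - 1), Nat.choose r i * min (min m n) (B.rank ^ i) := by
    rw [← Finset.sum_fiberwise_of_maps_to' hmaps (fun i => min (min m n) (B.rank ^ i))]
    refine Finset.sum_congr rfl fun i hi => ?_
    rw [Finset.sum_const, hfiber i hi, smul_eq_mul]
  calc H.rank ≤ (H.map f).rank := rank_le_rank_map14 H f
    _ = (∑ k ∈ Finset.range e, L k * E k * R k).rank := by rw [hdecomp]
    _ ≤ ∑ k ∈ Finset.range e, (L k * E k * R k).rank := rank_sum_le14 _ _
    _ = (L 0 * E 0 * R 0).rank + ∑ k ∈ Finset.Ico 1 e, (L k * E k * R k).rank := by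
        rw [Finset.range_eq_Ico, Finset.sum_eq_sum_Ico_succ_bot he0]
    _ ≤ E0.rank + ∑ k ∈ Finset.Ico 1 e, min (min m n) (B.rank ^ wt14 k) :=
        add_le_add hM0 (Finset.sum_le_sum hMk)
    _ = E0.rank + ∑ i ∈ Finset.Icc 1 (r - 1), Nat.choose r i * min (min m n) (B.rank ^ i) := by
        rw [hregroup]
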